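/- For any positive integers k ≥ 1 and t ≥ 2, the radio k-labeling number of the infinite distance graph D(1,2,...,t) satisfies rl_k(D(1,2,...,t)) ≥ (t/2)k² + 1/2. -/

import Mathlib

/-- The infinite distance graph on `ℤ` with distance set `D`: distinct integers
`i, j` are adjacent iff `|i - j| ∈ D`. -/
def distGraph (D : Set ℤ) : SimpleGraph ℤ where
  Adj i j := i ≠ j ∧ |i - j| ∈ D
  symm := by
    constructor
    intro i j h
    exact ⟨h.1.symm, by rw [abs_sub_comm]; exact h.2⟩
  loopless := by
    constructor
    intro i h
    exact h.1 rfl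

/-- `c : ℤ → ℕ` is a radio `k`-labeling of the graph `G` on `ℤ`:
`|c(u) - c(v)| ≥ k + 1 - d(u,v)` for all distinct `u, v`. -/
def IsRadioLabeling (G : SimpleGraph ℤ) (k : ℕ) (c : ℤ → ℕ) : Prop :=
  ∀ x y : ℤ, x ≠ y → (k : ℤ) + 1 - G.dist x y ≤ |(c x : ℤ) - c y|

/-- Doubled triangle inequality used for the permutation-sum bound. -/
lemma two_abs_le (a b N : ℤ) : 2 * |a - b| ≤ |2 * a - N| + |2 * b - N| := by
  have h1 : 2 * |a - b| = |2 * a - 2 * b| := by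
    rw [show (2 : ℤ) * a - 2 * b = 2 * (a - b) by ring, abs_mul]
    norm_num
  rw [h1]
  calc |2 * a - 2 * b| ≤ |2 * a - N| + |N - 2 * b| := abs_sub_le _ _ _
    _ = |2 * a - N| + |2 * b - N| := by rw [abs_sub_comm N]

/-- In `D(1,…,t)` one can walk from `x` to `y` in `m` steps whenever `|x-y| ≤ t·m`. -/
lemma distGraph_exists_walk (t : ℕ) (ht : 1 ≤ t) :
    ∀ (m : ℕ) (x y : ℤ), |x - y| ≤ (t : ℤ) * m →
      ∃ w : (distGraph {d : ℤ | 1 ≤ d ∧ d ≤ (t : ℤ)}).Walk x y, w.length ≤ m := by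
  have ht' : (1 : ℤ) ≤ (t : ℤ) := by exact_mod_cast ht
  intro m
  induction m with
  | zero =>
      intro x y h
      have h0 : |x - y| = 0 := le_antisymm (by simpa using h) (abs_nonneg _)
      have : x = y := by
        have := abs_eq_zero.mp h0
        omega
      subst this
      exact ⟨SimpleGraph.Walk.nil, by simp⟩
  | succ m ih =>
      intro x y h
      by_cases hxy : x = y
      · subst hxy; exact ⟨SimpleGraph.Walk.nil, by simp⟩
      · by_cases hcl : |x - y| ≤ (t : ℤ)
        · have hadj : (distGraph {d : ℤ | 1 ≤ d ∧ d ≤ (t : ℤ)}).Adj x y :=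
            ⟨hxy, ⟨Int.one_le_abs (sub_ne_zero.mpr hxy), hcl⟩⟩
          exact ⟨SimpleGraph.Walk.cons hadj SimpleGraph.Walk.nil, by simp⟩
        · push_neg at hcl
          push_cast at h
          rcases lt_or_gt_of_ne hxy with hlt | hgt
          · -- x < y
            have hyx : (t : ℤ) < y - x := by
              have : |x - y| = y - x := by rw [abs_sub_comm]; exact abs_of_pos (by omega)
              omega
            have hadj : (distGraph {d : ℤ | 1 ≤ d ∧ d ≤ (t : ℤ)}).Adj x (x + t) := by
              refine ⟨by intro heq; omega, ?_⟩
              have habs : |x - (x + (t : ℤ))| = (t : ℤ) := by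
                rw [show x - (x + (t : ℤ)) = -t by ring, abs_neg, abs_of_nonneg (by omega)]
              exact ⟨by rw [habs]; omega, by rw [habs]⟩
            obtain ⟨w, hw⟩ := ih (x + t) y (by
              have h2 : |x - y| = y - x := by rw [abs_sub_comm]; exact abs_of_pos (by omega)
              rw [h2] at h
              rw [show x + (t : ℤ) - y = -(y - x - t) by ring, abs_neg,
                abs_of_nonneg (by omega)]
              linarith)
            exact ⟨SimpleGraph.Walk.cons hadj w, by
              simpa using Nat.succ_le_succ hw⟩
          · -- y < x
            have hyx : (t : ℤ) < x - y := by
              have : |x - y| = x - y := abs_of_pos (by omega)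
              omega
            have hadj : (distGraph {d : ℤ | 1 ≤ d ∧ d ≤ (t : ℤ)}).Adj x (x - t) := by
              refine ⟨by intro heq; omega, ?_⟩
              have habs : |x - (x - (t : ℤ))| = (t : ℤ) := by
                rw [show x - (x - (t : ℤ)) = (t : ℤ) by ring, abs_of_nonneg (by omega)]
              exact ⟨by rw [habs]; omega, by rw [habs]⟩
            obtain ⟨w, hw⟩ := ih (x - t) y (by
              have h2 : |x - y| = x - y := abs_of_pos (by omega)
              rw [h2] at h
              rw [abs_of_nonneg (by omega)]
              linarith)
            exact ⟨SimpleGraph.Walk.cons hadj w, by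
              simpa using Nat.succ_le_succ hw⟩

/-- Distance upper bound in `D(1,…,t)`: `t · d(x,y) ≤ |x-y| + (t-1)`. -/
lemma distGraph_dist_bound (t : ℕ) (ht : 1 ≤ t) (x y : ℤ) (hxy : x ≠ y) :
    (t : ℤ) * (distGraph {d : ℤ | 1 ≤ d ∧ d ≤ (t : ℤ)}).dist x y ≤ |x - y| + (t : ℤ) - 1 := by
  set a : ℕ := (x - y).natAbs with ha
  have haz : (a : ℤ) = |x - y| := Int.natCast_natAbs _
  have ha1 : 1 ≤ a := by
    have := Int.one_le_abs (sub_ne_zero.mpr hxy)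
    omega
  set m : ℕ := (a + t - 1) / t with hm
  have hdm : t * m + (a + t - 1) % t = a + t - 1 := by
    rw [hm]; exact Nat.div_add_mod _ _
  have hmod : (a + t - 1) % t < t := Nat.mod_lt _ (by omega)
  have h1 : a ≤ t * m := by omega
  have h2 : t * m ≤ a + t - 1 := by omega
  obtain ⟨w, hw⟩ := distGraph_exists_walk t ht m x y (by
    rw [← haz]; exact_mod_cast h1)
  have hd : (distGraph {d : ℤ | 1 ≤ d ∧ d ≤ (t : ℤ)}).dist x y ≤ m :=
    le_trans (SimpleGraph.dist_le w) hw
  have hc1 : (t : ℤ) * (distGraph {d : ℤ | 1 ≤ d ∧ d ≤ (t : ℤ)}).dist x y ≤ (t : ℤ) * m :=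
    mul_le_mul_of_nonneg_left (by exact_mod_cast hd) (by positivity)
  have hc2 : (t : ℤ) * m ≤ (a : ℤ) + t - 1 := by
    have h3 := (Nat.cast_le (α := ℤ)).mpr h2
    push_cast [Nat.cast_sub (show 1 ≤ a + t by omega)] at h3
    linarith
  rw [← haz]
  linarith

/-- `2 · ∑_{j=0}^{n} |2j - n| ≤ (n+1)^2`. -/
lemma abs_sum_bound : ∀ n : ℕ,
    2 * (∑ j ∈ Finset.range (n + 1), |2 * (j : ℤ) - (n : ℤ)|) ≤ ((n : ℤ) + 1) ^ 2 := by
  intro n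
  induction n using Nat.strong_induction_on with
  | _ n ih =>
    match n with
    | 0 => norm_num
    | 1 => norm_num [Finset.sum_range_succ]
    | (m + 2) =>
      have hpred := ih m (by omega)
      have step : (∑ j ∈ Finset.range (m + 2 + 1), |2 * (j : ℤ) - ((m + 2 : ℕ) : ℤ)|)
          = (∑ j ∈ Finset.range (m + 1), |2 * (j : ℤ) - (m : ℤ)|) + (2 * (m : ℤ) + 4) := by
        rw [Finset.sum_range_succ' (fun j => |2 * (j : ℤ) - ((m + 2 : ℕ) : ℤ)|) (m + 2),
          Finset.sum_range_succ]
        have e1 : ∀ j ∈ Finset.range (m + 1),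
            |2 * (((j + 1 : ℕ)) : ℤ) - ((m + 2 : ℕ) : ℤ)| = |2 * (j : ℤ) - (m : ℤ)| := by
          intro j _
          have e : (2 : ℤ) * ((j + 1 : ℕ) : ℤ) - ((m + 2 : ℕ) : ℤ) = 2 * (j : ℤ) - (m : ℤ) := by
            push_cast; ring
          rw [e]
        rw [Finset.sum_congr rfl e1]
        have e3 : |2 * (((m + 1 + 1 : ℕ)) : ℤ) - ((m + 2 : ℕ) : ℤ)| = (m : ℤ) + 2 := by
          have e : (2 : ℤ) * ((m + 1 + 1 : ℕ) : ℤ) - ((m + 2 : ℕ) : ℤ) = (m : ℤ) + 2 := by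
            push_cast; ring
          rw [e]; exact abs_of_nonneg (by positivity)
        have e4 : |2 * (((0 : ℕ)) : ℤ) - ((m + 2 : ℕ) : ℤ)| = (m : ℤ) + 2 := by
          have e : (2 : ℤ) * ((0 : ℕ) : ℤ) - ((m + 2 : ℕ) : ℤ) = -((m : ℤ) + 2) := by
            push_cast; ring
          rw [e, abs_neg]; exact abs_of_nonneg (by positivity)
        rw [e3, e4]
        ring
      rw [step]
      have ecast : (((m + 2 : ℕ)) : ℤ) = (m : ℤ) + 2 := by push_cast; ring
      rw [ecast]
      nlinarith [hpred]

/-- For `k ≥ 1` and `t ≥ 2`, `rl_k(D(1,2,…,t)) ≥ (t/2)k² + 1/2`: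
every radio `k`-labeling of `D(1,2,…,t)` has span at least `(t/2)k² + 1/2`. -/
theorem radio_lower_D1t (t k : ℕ) (ht : 2 ≤ t) (hk : 1 ≤ k) (c : ℤ → ℕ)
    (hc : IsRadioLabeling (distGraph {d : ℤ | 1 ≤ d ∧ d ≤ (t : ℤ)}) k c) :
    ∃ x y : ℤ, ((t : ℝ) / 2) * (k : ℝ) ^ 2 + 1 / 2 ≤ (c x : ℝ) - c y := by
  set G := distGraph {d : ℤ | 1 ≤ d ∧ d ≤ (t : ℤ)} with hG
  set n : ℕ := t * k with hn
  have hn2 : 2 ≤ n := by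
    have := Nat.mul_le_mul ht hk
    simpa [hn] using this
  set f : Fin (n + 1) → ℕ := fun j => c ((j : ℕ) : ℤ) with hf
  set σ := Tuple.sort f with hσ
  set τ : ℕ → ℕ := fun i => if h : i < n + 1 then ((σ ⟨i, h⟩ : Fin (n + 1)) : ℕ) else i with hτ
  have hτval : ∀ (i : ℕ) (h : i < n + 1), τ i = ((σ ⟨i, h⟩ : Fin (n + 1)) : ℕ) := by
    intro i h; simp only [hτ, dif_pos h]
  have hτinj : ∀ i j : ℕ, i < n + 1 → j < n + 1 → i ≠ j → τ i ≠ τ j := by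
    intro i j hi hj hij
    rw [hτval i hi, hτval j hj]
    intro hcon
    have h5 : σ ⟨i, hi⟩ = σ ⟨j, hj⟩ := Fin.val_injective hcon
    have h6 := σ.injective h5
    exact hij (by simpa [Fin.mk.injEq] using h6)
  have hmono : ∀ i j : ℕ, i ≤ j → j < n + 1 → c ((τ i : ℕ) : ℤ) ≤ c ((τ j : ℕ) : ℤ) := by
    intro i j hij hj
    have hi : i < n + 1 := lt_of_le_of_lt hij hj
    rw [hτval i hi, hτval j hj]
    have h7 := Tuple.monotone_sort f (show (⟨i, hi⟩ : Fin (n + 1)) ≤ ⟨j, hj⟩ from hij)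
    simpa [hf, Function.comp] using h7
  set u : ℕ → ℤ := fun i => (c ((τ i : ℕ) : ℤ) : ℤ) with hu
  set α : ℕ → ℤ := fun i => ((τ i : ℕ) : ℤ) with hα
  set v : ℕ → ℤ := fun i => |2 * α i - (n : ℤ)| with hv
  have ht1 : 1 ≤ t := by omega
  -- key step inequality
  have key : ∀ i ∈ Finset.range n,
      2 * (t : ℤ) * ((k : ℤ) + 1) - 2 * ((t : ℤ) - 1) - (v i + v (i + 1))
        ≤ 2 * (t : ℤ) * (u (i + 1) - u i) := by
    intro i hi
    rw [Finset.mem_range] at hi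
    have h1 : i < n + 1 := by omega
    have h2 : i + 1 < n + 1 := by omega
    have hne : α i ≠ α (i + 1) := by
      simp only [hα]
      intro hcon
      exact hτinj i (i + 1) h1 h2 (by omega) (by exact_mod_cast hcon)
    have hradio := hc (α i) (α (i + 1)) hne
    have hms : u i ≤ u (i + 1) := by
      simp only [hu]
      exact_mod_cast hmono i (i + 1) (by omega) h2
    have habs : |(c (α i) : ℤ) - c (α (i + 1))| = u (i + 1) - u i := by
      rw [abs_sub_comm]
      exact abs_of_nonneg (by simp only [hu, hα] at hms ⊢; omega)
    rw [habs] at hradio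
    have hd : (t : ℤ) * G.dist (α i) (α (i + 1)) ≤ |α i - α (i + 1)| + (t : ℤ) - 1 :=
      distGraph_dist_bound t ht1 _ _ hne
    have htri : 2 * |α i - α (i + 1)| ≤ v i + v (i + 1) := two_abs_le _ _ _
    have hdist0 : (0 : ℤ) ≤ (G.dist (α i) (α (i + 1)) : ℤ) := by positivity
    nlinarith [hradio, hd, htri, hms, hdist0]
  have hsum := Finset.sum_le_sum key
  -- evaluate RHS: telescoping
  have hRHS : (∑ i ∈ Finset.range n, 2 * (t : ℤ) * (u (i + 1) - u i))
      = 2 * (t : ℤ) * (u n - u 0) := by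
    rw [← Finset.mul_sum, Finset.sum_range_sub u]
  -- sum of v over a permutation
  have hperm : (∑ i ∈ Finset.range (n + 1), v i)
      = ∑ j ∈ Finset.range (n + 1), |2 * (j : ℤ) - (n : ℤ)| := by
    rw [← Fin.sum_univ_eq_sum_range (fun i => v i) (n + 1),
        ← Fin.sum_univ_eq_sum_range (fun j => |2 * (j : ℤ) - (n : ℤ)|) (n + 1)]
    have e1 : ∀ i : Fin (n + 1), v (i : ℕ) = |2 * ((σ i : ℕ) : ℤ) - (n : ℤ)| := by
      intro i
      simp only [hv, hα, hτval (i : ℕ) i.isLt, Fin.eta]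
    calc (∑ i : Fin (n + 1), v (i : ℕ))
        = ∑ i : Fin (n + 1), |2 * ((σ i : ℕ) : ℤ) - (n : ℤ)| :=
          Finset.sum_congr rfl fun i _ => e1 i
      _ = ∑ i : Fin (n + 1), |2 * ((i : ℕ) : ℤ) - (n : ℤ)| :=
          Equiv.sum_comp σ (fun j : Fin (n + 1) => |2 * ((j : ℕ) : ℤ) - (n : ℤ)|)
  have hsumv : (∑ i ∈ Finset.range n, (v i + v (i + 1)))
      = 2 * (∑ i ∈ Finset.range (n + 1), v i) - v 0 - v n := by
    rw [Finset.sum_add_distrib]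
    have e1 : (∑ i ∈ Finset.range n, v i) = (∑ i ∈ Finset.range (n + 1), v i) - v n := by
      rw [Finset.sum_range_succ]; ring
    have e2 : (∑ i ∈ Finset.range n, v (i + 1)) = (∑ i ∈ Finset.range (n + 1), v i) - v 0 := by
      rw [Finset.sum_range_succ' v n]; ring
    rw [e1, e2]; ring
  have hends : 2 ≤ v 0 + v n := by
    have hne : α 0 ≠ α n := by
      simp only [hα]
      intro hcon
      exact hτinj 0 n (by omega) (by omega) (by omega) (by exact_mod_cast hcon)
    have h1 : 1 ≤ |α 0 - α n| := Int.one_le_abs (sub_ne_zero.mpr hne)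
    have htri : 2 * |α 0 - α n| ≤ v 0 + v n := two_abs_le _ _ _
    omega
  have habssum := abs_sum_bound n
  rw [← hperm] at habssum
  -- put everything together
  have hLHS : (∑ i ∈ Finset.range n,
      (2 * (t : ℤ) * ((k : ℤ) + 1) - 2 * ((t : ℤ) - 1) - (v i + v (i + 1))))
      = (n : ℤ) * (2 * (t : ℤ) * ((k : ℤ) + 1) - 2 * ((t : ℤ) - 1))
        - (∑ i ∈ Finset.range n, (v i + v (i + 1))) := by
    rw [Finset.sum_sub_distrib, Finset.sum_const, Finset.card_range, nsmul_eq_mul]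
  rw [hRHS, hLHS, hsumv] at hsum
  have hnz : (n : ℤ) = (t : ℤ) * (k : ℤ) := by rw [hn]; push_cast; ring
  have ekey : ((n : ℤ)) * (2 * (t : ℤ) * ((k : ℤ) + 1) - 2 * ((t : ℤ) - 1))
      - (((n : ℤ) + 1) ^ 2 - 2) = (t : ℤ) ^ 2 * (k : ℤ) ^ 2 + 1 := by
    rw [hnz]; ring
  -- 2t(u n - u 0) ≥ t²k² + 1
  have hmain : (t : ℤ) ^ 2 * (k : ℤ) ^ 2 + 1 ≤ 2 * (t : ℤ) * (u n - u 0) := by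
    linarith [hsum, habssum, hends, ekey]
  -- conclude: 2(u n - u 0) ≥ t k² + 1
  set s : ℤ := u n - u 0 with hs
  have hstep : 1 ≤ (t : ℤ) * (2 * s - (t : ℤ) * (k : ℤ) ^ 2) := by
    have e : (t : ℤ) * (2 * s - (t : ℤ) * (k : ℤ) ^ 2)
        = 2 * (t : ℤ) * s - (t : ℤ) ^ 2 * (k : ℤ) ^ 2 := by ring
    rw [e]; linarith [hmain]
  have hfin : (t : ℤ) * (k : ℤ) ^ 2 + 1 ≤ 2 * s := by
    by_contra hcon
    push_neg at hcon
    have h1 : 2 * s - (t : ℤ) * (k : ℤ) ^ 2 ≤ 0 := by omega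
    have h2 : (t : ℤ) * (2 * s - (t : ℤ) * (k : ℤ) ^ 2) ≤ 0 :=
      mul_nonpos_of_nonneg_of_nonpos (by positivity) h1
    omega
  refine ⟨((τ n : ℕ) : ℤ), ((τ 0 : ℕ) : ℤ), ?_⟩
  have hfin' : (t : ℤ) * (k : ℤ) ^ 2 + 1 ≤ 2 * ((c ((τ n : ℕ) : ℤ) : ℤ) - (c ((τ 0 : ℕ) : ℤ) : ℤ)) := by
    simp only [hs, hu] at hfin
    exact hfin
  have hreal : ((t : ℝ)) * (k : ℝ) ^ 2 + 1 ≤ 2 * ((c ((τ n : ℕ) : ℤ) : ℝ) - (c ((τ 0 : ℕ) : ℤ) : ℝ)) := by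
    exact_mod_cast hfin'
  linarith
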